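/- For any lists p, s, and y* over a type α with decidable equality, the edit distance satisfies D(p ++ s, y*) ≥ min over 0 ≤ j ≤ |y*| of D(p, y*_{<j}); i.e., the edit distance between any completion of the prefix p and the target y* is lower bounded by the minimum edit distance between p and any prefix of y*. -/

import Mathlib

namespace Levenshtein

structure Cost (α β δ : Type*) where
  delete : α → δ
  insert : β → δ
  substitute : α → β → δ

def defaultCost {α : Type*} [DecidableEq α] : Cost α α ℕ where
  delete _ := 1
  insert _ := 1
  substitute a b := if a = b then 0 else 1

def impl {α β δ : Type*} [AddZeroClass δ] [Min δ] (C : Cost α β δ) (xs : List α) (y : β)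
    (d : {r : List δ // 0 < r.length}) : {r : List δ // 0 < r.length} :=
  let ⟨ds, w⟩ := d
  xs.zip (ds.zip ds.tail) |>.foldr
    (init := ⟨[C.insert y + ds.getLast (List.ne_nil_of_length_pos w)], by simp⟩)
    (fun ⟨x, d₀, d₁⟩ ⟨r, w⟩ =>
      ⟨min (C.delete x + r[0]) (min (C.insert y + d₀) (C.substitute x y + d₁)) :: r, by simp⟩)

end Levenshtein

def suffixLevenshtein {α β δ : Type*} [AddZeroClass δ] [Min δ] (C : Levenshtein.Cost α β δ)
    (xs : List α) (ys : List β) : {r : List δ // 0 < r.length} :=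
  ys.foldr
    (Levenshtein.impl C xs)
    (xs.foldr (init := ⟨[0], by simp⟩) (fun a ⟨r, w⟩ => ⟨(C.delete a + r[0]) :: r, by simp⟩))

def levenshtein {α β δ : Type*} [AddZeroClass δ] [Min δ] (C : Levenshtein.Cost α β δ)
    (xs : List α) (ys : List β) : δ :=
  let ⟨r, _⟩ := suffixLevenshtein C xs ys
  r[0]

/-- Unit-cost Levenshtein edit distance between two lists. -/
def editDist {α : Type*} [DecidableEq α] (u v : List α) : ℕ :=
  levenshtein Levenshtein.defaultCost u v

/-- `rowMin p y = min over 0 ≤ j ≤ |y|` of the edit distance between `p` and `y.take j`. -/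
def rowMin {α : Type*} [DecidableEq α] (p y : List α) : ℕ :=
  (Finset.range (y.length + 1)).inf' (by simp) (fun j => editDist p (y.take j))

section portaux

namespace Levenshtein

variable {α β δ : Type*} [AddZeroClass δ] [Min δ] (C : Cost α β δ)

theorem impl_cons {x : α} {xs : List α} {y : β} {d : δ} {ds : List δ} {w}
    (w' : 0 < List.length ds) :
    impl C (x :: xs) y ⟨d :: ds, w⟩ =
      let ⟨r, w⟩ := impl C xs y ⟨ds, w'⟩
      ⟨min (C.delete x + r[0]) (min (C.insert y + d) (C.substitute x y + ds[0])) :: r, by simp⟩ :=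
  match ds, w' with | _ :: _, _ => rfl

theorem impl_cons_fst_zero {x : α} {xs : List α} {y : β} {d : δ} {ds : List δ} {w} (h)
    (w' : 0 < List.length ds) :
    (impl C (x :: xs) y ⟨d :: ds, w⟩).1[0]'h =
      let ⟨r, w⟩ := impl C xs y ⟨ds, w'⟩
      min (C.delete x + r[0]) (min (C.insert y + d) (C.substitute x y + ds[0])) :=
  match ds, w' with | _ :: _, _ => rfl

theorem impl_length {xs : List α} {y : β} (d : {r : List δ // 0 < r.length})
    (w : d.1.length = xs.length + 1) :
    (impl C xs y d).1.length = xs.length + 1 := by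
  induction xs generalizing d with
  | nil => rfl
  | cons x xs ih =>
    dsimp [impl]
    match d, w with
    | ⟨d₁ :: d₂ :: ds, _⟩, w =>
      dsimp
      congr 1
      exact ih ⟨d₂ :: ds, (by simp)⟩ (by simpa using w)

end Levenshtein

open Levenshtein in
theorem suffixLevenshtein_length {α β δ : Type*} [AddZeroClass δ] [Min δ] (C : Cost α β δ)
    (xs : List α) (ys : List β) :
    (suffixLevenshtein C xs ys).1.length = xs.length + 1 := by
  induction ys with
  | nil =>
    dsimp [suffixLevenshtein]
    induction xs with
    | nil => rfl
    | cons _ xs ih =>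
      simp_all
  | cons y ys ih =>
    dsimp [suffixLevenshtein]
    rw [impl_length]
    exact ih

open Levenshtein in
theorem suffixLevenshtein_cons₂ {α β δ : Type*} [AddZeroClass δ] [Min δ] (C : Cost α β δ)
    (xs : List α) (y : β) (ys : List β) :
    suffixLevenshtein C xs (y :: ys) = (impl C xs) y (suffixLevenshtein C xs ys) := rfl

theorem suffixLevenshtein_cons₁_aux {α : Type*} {x y : {r : List α // 0 < r.length}}
    (w₀ : x.1[0]'x.2 = y.1[0]'y.2) (w : x.1.tail = y.1.tail) : x = y := by
  match x, y with
  | ⟨hx :: tx, _⟩, ⟨hy :: ty, _⟩ => simp_all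

open Levenshtein in
theorem suffixLevenshtein_cons₁ {α β δ : Type*} [AddZeroClass δ] [Min δ] (C : Cost α β δ)
    (x : α) (xs : List α) (ys : List β) :
    suffixLevenshtein C (x :: xs) ys =
      ⟨levenshtein C (x :: xs) ys ::
        (suffixLevenshtein C xs ys).1, by simp⟩ := by
  induction ys with
  | nil =>
    rfl
  | cons y ys ih =>
    apply suffixLevenshtein_cons₁_aux
    · rfl
    · rw [suffixLevenshtein_cons₂ C (x :: xs), ih, impl_cons]
      · rfl
      · simp [suffixLevenshtein_length]

open Levenshtein in
theorem suffixLevenshtein_cons_cons_fst_get_zero {α β δ : Type*} [AddZeroClass δ] [Min δ]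
    (C : Cost α β δ) (x : α) (xs : List α) (y : β) (ys : List β) (w) :
    (suffixLevenshtein C (x :: xs) (y :: ys)).1[0]'w =
      let ⟨dx, _⟩ := suffixLevenshtein C xs (y :: ys)
      let ⟨dy, _⟩ := suffixLevenshtein C (x :: xs) ys
      let ⟨dxy, _⟩ := suffixLevenshtein C xs ys
      min
        (C.delete x + dx[0])
        (min
          (C.insert y + dy[0])
          (C.substitute x y + dxy[0])) := by
  conv =>
    lhs
    dsimp only [suffixLevenshtein_cons₂]
  simp only [suffixLevenshtein_cons₁]
  rw [impl_cons_fst_zero]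
  rfl

open Levenshtein in
@[simp] theorem levenshtein_nil_nil {α β δ : Type*} [AddZeroClass δ] [Min δ] (C : Cost α β δ) :
    levenshtein C ([] : List α) ([] : List β) = 0 := by
  simp [levenshtein, suffixLevenshtein]

open Levenshtein in
@[simp] theorem levenshtein_nil_cons {α β δ : Type*} [AddZeroClass δ] [Min δ] (C : Cost α β δ)
    (y : β) (ys : List β) :
    levenshtein C ([] : List α) (y :: ys) = C.insert y + levenshtein C [] ys := by
  dsimp +unfoldPartialApp [levenshtein, suffixLevenshtein, impl]
  have key : ∀ (L : List δ), L.length = 1 → ∀ h hp, L.getLast h = L[0]'hp := by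
    intro L hl h hp; match L, hl with | [a], _ => rfl
  exact congrArg (C.insert y + ·) (key _ (suffixLevenshtein_length C ([] : List α) ys) _ _)

open Levenshtein in
@[simp] theorem levenshtein_cons_nil {α β δ : Type*} [AddZeroClass δ] [Min δ] (C : Cost α β δ)
    (x : α) (xs : List α) :
    levenshtein C (x :: xs) ([] : List β) = C.delete x + levenshtein C xs [] :=
  rfl

open Levenshtein in
@[simp] theorem levenshtein_cons_cons {α β δ : Type*} [AddZeroClass δ] [Min δ] (C : Cost α β δ)
    (x : α) (xs : List α) (y : β) (ys : List β) :
    levenshtein C (x :: xs) (y :: ys) =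
      min (C.delete x + levenshtein C xs (y :: ys))
        (min (C.insert y + levenshtein C (x :: xs) ys)
          (C.substitute x y + levenshtein C xs ys)) :=
  suffixLevenshtein_cons_cons_fst_get_zero ..

@[simp] theorem defaultCost_delete {α : Type*} [DecidableEq α] (a : α) :
    (Levenshtein.defaultCost : Levenshtein.Cost α α ℕ).delete a = 1 := rfl

@[simp] theorem defaultCost_insert {α : Type*} [DecidableEq α] (a : α) :
    (Levenshtein.defaultCost : Levenshtein.Cost α α ℕ).insert a = 1 := rfl

@[simp] theorem defaultCost_substitute {α : Type*} [DecidableEq α] (a b : α) :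
    (Levenshtein.defaultCost : Levenshtein.Cost α α ℕ).substitute a b = if a = b then 0 else 1 :=
  rfl

theorem le_levenshtein_append {α β : Type*} (C : Levenshtein.Cost β α ℕ) (xs : List β)
    (ys₁ ys₂ : List α) :
    ∃ xs', xs' <:+ xs ∧ levenshtein C xs' ys₂ ≤ levenshtein C xs (ys₁ ++ ys₂) := by
  induction ys₁ generalizing xs with
  | nil => exact ⟨xs, List.suffix_refl _, le_rfl⟩
  | cons y ys₁ ih =>
    induction xs with
    | nil =>
      obtain ⟨xs', h1, h2⟩ := ih []
      refine ⟨xs', h1, ?_⟩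
      rw [List.cons_append, levenshtein_nil_cons]
      omega
    | cons x xs ihx =>
      obtain ⟨a, ha1, ha2⟩ := ihx
      obtain ⟨b, hb1, hb2⟩ := ih (x :: xs)
      obtain ⟨c, hc1, hc2⟩ := ih xs
      have hs : ∀ t, t <:+ xs → t <:+ x :: xs := fun t h => h.trans (List.suffix_cons x xs)
      rw [List.cons_append] at ha2 ⊢
      rw [levenshtein_cons_cons]
      rcases le_total (C.delete x + levenshtein C xs (y :: (ys₁ ++ ys₂)))
          (min (C.insert y + levenshtein C (x :: xs) (ys₁ ++ ys₂))
            (C.substitute x y + levenshtein C xs (ys₁ ++ ys₂))) with h | h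
      · rw [min_eq_left h]; exact ⟨a, hs a ha1, by omega⟩
      · rw [min_eq_right h]
        rcases le_total (C.insert y + levenshtein C (x :: xs) (ys₁ ++ ys₂))
            (C.substitute x y + levenshtein C xs (ys₁ ++ ys₂)) with h' | h'
        · rw [min_eq_left h']; exact ⟨b, hb1, by omega⟩
        · rw [min_eq_right h']; exact ⟨c, hs c hc1, by omega⟩

end portaux

section aux

variable {α : Type*} [DecidableEq α]

lemma editDist_nil_left (v : List α) : editDist [] v = v.length := by
  induction v with
  | nil => simp [editDist]
  | cons y v ih => simp [editDist] at ih ⊢; omega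

lemma editDist_nil_right (u : List α) : editDist u [] = u.length := by
  induction u with
  | nil => simp [editDist]
  | cons x u ih => simp [editDist] at ih ⊢; omega

lemma editDist_cons_cons (x : α) (u : List α) (y : α) (v : List α) :
    editDist (x :: u) (y :: v) =
      min (1 + editDist u (y :: v))
        (min (1 + editDist (x :: u) v) ((if x = y then 0 else 1) + editDist u v)) := by
  simp [editDist]

attribute [local irreducible] editDist

lemma editDist_append_append (x y : α) (u v : List α) :
      editDist (u ++ [x]) (v ++ [y]) =
        min (1 + editDist u (v ++ [y]))
          (min (1 + editDist (u ++ [x]) v) ((if x = y then 0 else 1) + editDist u v)) := by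
  induction u generalizing v with
  | nil =>
    induction v with
    | nil =>
      simp only [List.nil_append]
      rw [editDist_cons_cons x [] y [], editDist_nil_left, editDist_nil_right,
        editDist_nil_left]
    | cons b v ih =>
      simp only [List.nil_append, List.cons_append] at ih ⊢
      rw [editDist_cons_cons x [] b (v ++ [y]), ih, editDist_cons_cons x [] b v,
        editDist_nil_left, editDist_nil_left, editDist_nil_left, editDist_nil_left]
      simp only [List.length_append, List.length_cons, List.length_nil]
      split_ifs <;> (apply le_antisymm <;> simp only [le_min_iff, min_le_iff] <;> omega)
  | cons a u ihu =>
    induction v with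
    | nil =>
      have ih := ihu []
      simp only [List.nil_append, List.cons_append] at ih ⊢
      rw [editDist_cons_cons a (u ++ [x]) y [], ih, editDist_cons_cons a u y [],
        editDist_nil_right, editDist_nil_right, editDist_nil_right, editDist_nil_right]
      simp only [List.length_append, List.length_cons, List.length_nil]
      split_ifs <;> (apply le_antisymm <;> simp only [le_min_iff, min_le_iff] <;> omega)
    | cons b v ihv =>
      have ih1 := ihu (b :: v)
      have ih3 := ihu v
      simp only [List.cons_append] at ih1 ih3 ihv ⊢
      rw [editDist_cons_cons a (u ++ [x]) b (v ++ [y]), ih1, ihv, ih3,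
        editDist_cons_cons a u b (v ++ [y]), editDist_cons_cons a (u ++ [x]) b v,
        editDist_cons_cons a u b v]
      split_ifs <;> (apply le_antisymm <;> simp only [le_min_iff, min_le_iff] <;> omega)

lemma editDist_reverse (u v : List α) : editDist u.reverse v.reverse = editDist u v := by
  induction u generalizing v with
  | nil => simp [editDist_nil_left]
  | cons x u ihu =>
    induction v with
    | nil => simp [editDist_nil_right]
    | cons y v ihv =>
      have ih1 := ihu (y :: v)
      have ih3 := ihu v
      simp only [List.reverse_cons] at ih1 ih3 ihv ⊢
      rw [editDist_append_append, ih1, ihv, ih3, editDist_cons_cons]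

lemma editDist_comm (u v : List α) : editDist u v = editDist v u := by
  induction u generalizing v with
  | nil => simp [editDist_nil_left, editDist_nil_right]
  | cons x u ihu =>
    induction v with
    | nil => simp [editDist_nil_left, editDist_nil_right]
    | cons y v ihv =>
      rw [editDist_cons_cons x u y v, editDist_cons_cons y v x u, ihu (y :: v), ihv, ihu v]
      have hc : (if x = y then (0 : ℕ) else 1) = if y = x then 0 else 1 := by
        rcases eq_or_ne x y with h | h
        · simp [h]
        · rw [if_neg h, if_neg (Ne.symm h)]
      rw [hc]
      apply le_antisymm <;> simp only [le_min_iff, min_le_iff] <;> omega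

end aux

theorem completion_editDist_ge_rowMin {α : Type*} [DecidableEq α]
    (p s ystar : List α) :
    editDist (p ++ s) ystar ≥ rowMin p ystar := by
  have key : editDist (p ++ s) ystar
      = levenshtein Levenshtein.defaultCost ystar.reverse (s.reverse ++ p.reverse) := by
    rw [editDist_comm, ← editDist_reverse ystar (p ++ s)]
    simp [editDist, List.reverse_append]
  rw [key]
  obtain ⟨xs', hsuff, hle⟩ :=
    le_levenshtein_append (C := (Levenshtein.defaultCost : Levenshtein.Cost α α ℕ))
      ystar.reverse s.reverse p.reverse
  have hpre : xs'.reverse <+: ystar := by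
    simpa using List.reverse_prefix.mpr hsuff
  have hj : xs'.reverse = ystar.take xs'.reverse.length := List.prefix_iff_eq_take.mp hpre
  have hjle : xs'.reverse.length ≤ ystar.length := hpre.length_le
  have hval : editDist p (ystar.take xs'.reverse.length)
      ≤ levenshtein Levenshtein.defaultCost ystar.reverse (s.reverse ++ p.reverse) := by
    calc editDist p (ystar.take xs'.reverse.length)
        = editDist p xs'.reverse := by rw [← hj]
      _ = editDist xs'.reverse p := editDist_comm _ _
      _ = editDist xs' p.reverse := by rw [← editDist_reverse xs' p.reverse]; simp
      _ ≤ _ := hle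
  refine le_trans ?_ hval
  exact Finset.inf'_le _ (by simpa [Nat.lt_succ_iff] using hjle)
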